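/- Let G be a finite simple connected graph on n vertices with Sudoku number sn(G) = n − 1, and let φ be a proper χ(G)-colouring of G. Then any two distinct vertices of G that are full with respect to φ are adjacent. -/

import Mathlib

/-- A proper `k`-colouring of `G` using colours `{1, …, k}`. -/
def IsProperColouring {V : Type*} (G : SimpleGraph V) (k : ℕ) (φ : V → ℕ) : Prop :=
  (∀ v, φ v ∈ Finset.Icc 1 k) ∧ ∀ ⦃u v⦄, G.Adj u v → φ u ≠ φ v

/-- A partial proper `k`-colouring of `G` (uncoloured vertices get `none`). -/
def IsPartialProper {V : Type*} (G : SimpleGraph V) (k : ℕ) (ψ : V → Option ℕ) : Prop :=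
  (∀ v c, ψ v = some c → c ∈ Finset.Icc 1 k) ∧
    ∀ ⦃u v⦄, G.Adj u v → ∀ c, ψ u = some c → ψ v ≠ some c

/-- `φ` extends the partial colouring `ψ`. -/
def ExtendsPartial {V : Type*} (φ : V → ℕ) (ψ : V → Option ℕ) : Prop :=
  ∀ v c, ψ v = some c → φ v = c

/-- A Sudoku colouring: a partial proper `k`-colouring with exactly one extension to a
proper `k`-colouring of all of `G`. -/
def IsSudoku {V : Type*} (G : SimpleGraph V) (k : ℕ) (ψ : V → Option ℕ) : Prop :=
  IsPartialProper G k ψ ∧ ∃! φ : V → ℕ, IsProperColouring G k φ ∧ ExtendsPartial φ ψ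

/-- The Sudoku number: the least number of coloured vertices in a Sudoku colouring. -/
noncomputable def sudokuNumber {V : Type*} [Fintype V] (G : SimpleGraph V) (k : ℕ) : ℕ :=
  sInf {m | ∃ ψ : V → Option ℕ, IsSudoku G k ψ ∧
    (Finset.univ.filter fun v => (ψ v).isSome).card = m}

/-- The set of colours appearing on the coloured neighbours of `v` under `ψ`. -/
def nbrColours {V : Type*} [Fintype V] [DecidableEq V] (G : SimpleGraph V)
    [DecidableRel G.Adj] (ψ : V → Option ℕ) (v : V) : Finset ℕ :=
  (G.neighborFinset v).biUnion fun u => (ψ u).toFinset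

/-- A vertex is full (w.r.t. a proper `k`-colouring `φ`) if every colour other than its own
appears on its neighbourhood. -/
def IsFull {V : Type*} [Fintype V] [DecidableEq V] (G : SimpleGraph V)
    [DecidableRel G.Adj] (k : ℕ) (φ : V → ℕ) (v : V) : Prop :=
  (G.neighborFinset v).image φ = Finset.Icc 1 k \ {φ v}

/-- A proper `k`-colouring is 1-minimal if it has as few colour-1 vertices as possible. -/
def IsOneMinimal {V : Type*} [Fintype V] (G : SimpleGraph V) (k : ℕ) (φ : V → ℕ) : Prop :=
  IsProperColouring G k φ ∧ ∀ φ' : V → ℕ, IsProperColouring G k φ' →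
    (Finset.univ.filter fun v => φ v = 1).card ≤ (Finset.univ.filter fun v => φ' v = 1).card

theorem stmt_2 {V : Type*} [Fintype V] [DecidableEq V]
    (G : SimpleGraph V) [DecidableRel G.Adj] (k : ℕ)
    (hχ : G.chromaticNumber = k)
    (hconn : G.Connected)
    (hsn : sudokuNumber G k = Fintype.card V - 1)
    (φ : V → ℕ) (hφ : IsProperColouring G k φ)
    (u v : V) (huv : u ≠ v)
    (hu : IsFull G k φ u) (hv : IsFull G k φ v) :
    G.Adj u v := by
  by_contra hadj
  set ψ : V → Option ℕ := fun w => if w = u ∨ w = v then none else some (φ w) with hψ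
  -- key: any proper extension of ψ equals φ
  have hforce : ∀ w : V, ∀ φ' : V → ℕ, IsProperColouring G k φ' → ExtendsPartial φ' ψ →
      IsFull G k φ w → (∀ x, G.Adj w x → x ≠ u ∧ x ≠ v) → φ' w = φ w := by
    intro w φ' hφ' hext hfull hnbr
    by_contra hne
    have h1 : φ' w ∈ Finset.Icc 1 k \ {φ w} := by
      simp only [Finset.mem_sdiff, Finset.mem_singleton]
      exact ⟨hφ'.1 w, hne⟩
    rw [← hfull] at h1
    obtain ⟨x, hx, hxe⟩ := Finset.mem_image.mp h1
    rw [SimpleGraph.mem_neighborFinset] at hx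
    have hxuv := hnbr x hx
    have : φ' x = φ x := hext x (φ x) (by simp [hψ, hxuv.1, hxuv.2])
    exact hφ'.2 hx (by rw [this, hxe])
  have hnu : ∀ x, G.Adj u x → x ≠ u ∧ x ≠ v := by
    intro x hx
    exact ⟨fun h => G.loopless.irrefl u (h ▸ hx), fun h => hadj (h ▸ hx)⟩
  have hnv : ∀ x, G.Adj v x → x ≠ u ∧ x ≠ v := by
    intro x hx
    refine ⟨fun h => hadj (h ▸ hx).symm, fun h => G.loopless.irrefl v (h ▸ hx)⟩
  have huniq : ∀ φ' : V → ℕ, IsProperColouring G k φ' → ExtendsPartial φ' ψ → φ' = φ := by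
    intro φ' hφ' hext
    funext w
    by_cases hw : w = u
    · subst hw; exact hforce w φ' hφ' hext hu hnu
    by_cases hw' : w = v
    · subst hw'; exact hforce w φ' hφ' hext hv hnv
    · exact hext w (φ w) (by simp [hψ, hw, hw'])
  have hextφ : ExtendsPartial φ ψ := by
    intro w c hc
    simp only [hψ] at hc
    split at hc
    · exact absurd hc (by simp)
    · exact (Option.some_injective _ hc).symm ▸ rfl
  have hsud : IsSudoku G k ψ := by
    refine ⟨⟨fun w c hc => ?_, fun a b hab c hac hbc => ?_⟩, φ, ⟨hφ, hextφ⟩,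
      fun φ' h => huniq φ' h.1 h.2⟩
    · simp only [hψ] at hc
      split at hc
      · exact absurd hc (by simp)
      · exact (Option.some_injective _ hc) ▸ hφ.1 w
    · simp only [hψ] at hac hbc
      split at hac
      · exact absurd hac (by simp)
      split at hbc
      · exact absurd hbc (by simp)
      exact hφ.2 hab ((Option.some_injective _ hac) ▸ (Option.some_injective _ hbc) ▸ rfl)
  have hcard : (Finset.univ.filter fun w => (ψ w).isSome).card = Fintype.card V - 2 := by
    have : (Finset.univ.filter fun w => (ψ w).isSome) = Finset.univ \ {u, v} := by
      ext w
      simp only [Finset.mem_filter, Finset.mem_sdiff, Finset.mem_univ, true_and,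
        Finset.mem_insert, Finset.mem_singleton, hψ]
      constructor
      · intro h hw
        rw [if_pos hw] at h; simp at h
      · intro h
        rw [if_neg h]; simp
    rw [this, Finset.card_sdiff_of_subset (Finset.subset_univ _), Finset.card_univ,
      Finset.card_insert_of_notMem (by simpa using huv), Finset.card_singleton]
  have hle : sudokuNumber G k ≤ Fintype.card V - 2 :=
    Nat.sInf_le ⟨ψ, hsud, hcard⟩
  rw [hsn] at hle
  have h2 : 2 ≤ Fintype.card V := by
    have := Finset.card_le_card (Finset.subset_univ ({u, v} : Finset V))
    rwa [Finset.card_pair huv, Finset.card_univ] at this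
  omega
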